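/- Let a, b be real numbers with |a| + |b| > 0, set c := 36000 (|a|+|b|)⁴ and J₊ := (-20 + √(400 + c)) / c (the unique positive zero of f(J) = -J + 40J² + cJ³). Let u, v : ℝ × ℝ → ℝ be smooth (C^∞) on [0,∞) × [0,1], satisfying the coupled Burgers' equations ∂_t u = ∂_{xx} u − u ∂_x u − a ∂_x(uv) and ∂_t v = ∂_{xx} v − v ∂_x v − b ∂_x(uv) for all t ≥ 0 and x ∈ [0,1], with Dirichlet boundary conditions u(t,0) = u(t,1) = v(t,0) = v(t,1) = 0 for all t ≥ 0. Define J(t) := ½(∫₀¹ (∂_x u(t,x))² dx + ∫₀¹ (∂_x v(t,x))² dx) and assume J(0) < J₊. Then J(t) → 0 as t → ∞. -/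

import Mathlib

open Set MeasureTheory intervalIntegral Filter

namespace CBED

/-- The strip `[0,∞) × [0,1]`. -/
def S : Set (ℝ × ℝ) := Set.Ici (0:ℝ) ×ˢ Set.Icc (0:ℝ) 1

lemma interior_S : interior S = Set.Ioi (0:ℝ) ×ˢ Set.Ioo (0:ℝ) 1 := by
  rw [S, interior_prod_eq, interior_Ici, interior_Icc]

lemma uds : UniqueDiffOn ℝ S := by
  apply uniqueDiffOn_convex ((convex_Ici 0).prod (convex_Icc 0 1))
  rw [interior_S]
  exact ⟨(1, 1/2), by norm_num, by norm_num, by norm_num⟩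

lemma mem_S {t x : ℝ} (ht : 0 ≤ t) (hx : x ∈ Set.Icc (0:ℝ) 1) : ((t, x) : ℝ × ℝ) ∈ S :=
  ⟨ht, hx⟩

lemma mem_interior_S {t x : ℝ} (ht : 0 < t) (hx : x ∈ Set.Ioo (0:ℝ) 1) :
    ((t, x) : ℝ × ℝ) ∈ interior S := by
  rw [interior_S]; exact ⟨ht, hx⟩

noncomputable def px (f : ℝ × ℝ → ℝ) : ℝ × ℝ → ℝ := fun p => fderivWithin ℝ f S p (0, 1)

noncomputable def pt (f : ℝ × ℝ → ℝ) : ℝ × ℝ → ℝ := fun p => fderivWithin ℝ f S p (1, 0)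

variable {f : ℝ × ℝ → ℝ}

lemma contDiffOn_px (hf : ContDiffOn ℝ (⊤ : ℕ∞) f S) : ContDiffOn ℝ (⊤ : ℕ∞) (px f) S := by
  have h1 : ContDiffOn ℝ (⊤ : ℕ∞) (fderivWithin ℝ f S) S :=
    hf.fderivWithin uds (by exact_mod_cast le_top)
  exact (ContinuousLinearMap.apply ℝ ℝ ((0:ℝ), (1:ℝ))).contDiff.comp_contDiffOn h1

lemma contDiffOn_pt (hf : ContDiffOn ℝ (⊤ : ℕ∞) f S) : ContDiffOn ℝ (⊤ : ℕ∞) (pt f) S := by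
  have h1 : ContDiffOn ℝ (⊤ : ℕ∞) (fderivWithin ℝ f S) S :=
    hf.fderivWithin uds (by exact_mod_cast le_top)
  exact (ContinuousLinearMap.apply ℝ ℝ ((1:ℝ), (0:ℝ))).contDiff.comp_contDiffOn h1

lemma continuousOn_px (hf : ContDiffOn ℝ (⊤ : ℕ∞) f S) : ContinuousOn (px f) S :=
  (contDiffOn_px hf).continuousOn

lemma continuousOn_pt (hf : ContDiffOn ℝ (⊤ : ℕ∞) f S) : ContinuousOn (pt f) S :=
  (contDiffOn_pt hf).continuousOn

/-- spatial derivative within `[0,1]`. -/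
lemma hasDerivWithinAt_x (hf : ContDiffOn ℝ (⊤ : ℕ∞) f S) {t x : ℝ} (ht : 0 ≤ t)
    (hx : x ∈ Set.Icc (0:ℝ) 1) :
    HasDerivWithinAt (fun y => f (t, y)) (px f (t, x)) (Set.Icc 0 1) x := by
  have hcurve : HasDerivWithinAt (fun y => ((t, y) : ℝ × ℝ)) ((0:ℝ), (1:ℝ)) (Set.Icc 0 1) x :=
    ((hasDerivAt_const x t).prodMk (hasDerivAt_id x)).hasDerivWithinAt
  have hF : HasFDerivWithinAt f (fderivWithin ℝ f S (t, x)) S (t, x) :=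
    (hf.differentiableOn (by simp) (t, x) (mem_S ht hx)).hasFDerivWithinAt
  exact hF.comp_hasDerivWithinAt x hcurve (fun y hy => mem_S ht hy)

lemma hasDerivAt_x (hf : ContDiffOn ℝ (⊤ : ℕ∞) f S) {t x : ℝ} (ht : 0 ≤ t)
    (hx : x ∈ Set.Ioo (0:ℝ) 1) :
    HasDerivAt (fun y => f (t, y)) (px f (t, x)) x :=
  (hasDerivWithinAt_x hf ht (Set.mem_Icc_of_Ioo hx)).hasDerivAt (Icc_mem_nhds hx.1 hx.2)

/-- time derivative for `t > 0`. -/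
lemma hasDerivAt_t (hf : ContDiffOn ℝ (⊤ : ℕ∞) f S) {t x : ℝ} (ht : 0 < t)
    (hx : x ∈ Set.Icc (0:ℝ) 1) :
    HasDerivAt (fun s => f (s, x)) (pt f (t, x)) t := by
  have hcurve : HasDerivWithinAt (fun s => ((s, x) : ℝ × ℝ)) ((1:ℝ), (0:ℝ)) (Set.Ici 0) t :=
    ((hasDerivAt_id t).prodMk (hasDerivAt_const t x)).hasDerivWithinAt
  have hF : HasFDerivWithinAt f (fderivWithin ℝ f S (t, x)) S (t, x) :=
    (hf.differentiableOn (by simp) (t, x) (mem_S ht.le hx)).hasFDerivWithinAt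
  exact (hF.comp_hasDerivWithinAt t hcurve (fun s hs => mem_S hs hx)).hasDerivAt
    (Ici_mem_nhds ht)

lemma deriv_eq_px (hf : ContDiffOn ℝ (⊤ : ℕ∞) f S) {t x : ℝ} (ht : 0 ≤ t)
    (hx : x ∈ Set.Ioo (0:ℝ) 1) :
    deriv (fun y => f (t, y)) x = px f (t, x) :=
  (hasDerivAt_x hf ht hx).deriv

lemma deriv2_eq_pxpx (hf : ContDiffOn ℝ (⊤ : ℕ∞) f S) {t x : ℝ} (ht : 0 ≤ t)
    (hx : x ∈ Set.Ioo (0:ℝ) 1) :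
    deriv (deriv (fun y => f (t, y))) x = px (px f) (t, x) := by
  have hev : deriv (fun y => f (t, y)) =ᶠ[nhds x] (fun y => px f (t, y)) := by
    filter_upwards [Ioo_mem_nhds hx.1 hx.2] with y hy
    exact deriv_eq_px hf ht hy
  rw [Filter.EventuallyEq.deriv_eq hev]
  exact (hasDerivAt_x (contDiffOn_px hf) ht hx).deriv

end CBED

namespace CBED

/-- Symmetry of mixed partial derivatives at interior points. -/
lemma mixed_symm (hf : ContDiffOn ℝ (⊤ : ℕ∞) f S) {t x : ℝ} (ht : 0 < t)
    (hx : x ∈ Set.Ioo (0:ℝ) 1) :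
    pt (px f) (t, x) = px (pt f) (t, x) := by
  set p : ℝ × ℝ := (t, x) with hp
  have hpi : p ∈ interior S := mem_interior_S ht hx
  have hnd : S ∈ nhds p := mem_interior_iff_mem_nhds.1 hpi
  have hfa : ContDiffAt ℝ (⊤ : ℕ∞) f p := hf.contDiffAt hnd
  have hsymm : IsSymmSndFDerivAt ℝ f p :=
    hfa.isSymmSndFDerivAt (by simp; exact WithTop.coe_le_coe.2 le_top)
  -- fderiv of fderiv exists at p
  have hdf : DifferentiableAt ℝ (fderiv ℝ f) p := by
    have h2 : ContDiffAt ℝ (⊤ : ℕ∞) (fderiv ℝ f) p := by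
      have := hfa.fderiv_right (m := (⊤ : ℕ∞)) (by exact_mod_cast le_top)
      exact this
    exact h2.differentiableAt (by simp)
  have hdf' : HasFDerivAt (fderiv ℝ f) (fderiv ℝ (fderiv ℝ f) p) p := hdf.hasFDerivAt
  -- fderivWithin = fderiv eventually near p
  have hev : ∀ᶠ q in nhds p, fderivWithin ℝ f S q = fderiv ℝ f q := by
    filter_upwards [isOpen_interior.mem_nhds hpi] with q hq
    exact fderivWithin_of_mem_nhds (mem_interior_iff_mem_nhds.1 hq)
  have key : ∀ v w : ℝ × ℝ,
      fderivWithin ℝ (fun q => fderivWithin ℝ f S q v) S p w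
        = fderiv ℝ (fderiv ℝ f) p w v := by
    intro v w
    have hevv : (fun q => fderivWithin ℝ f S q v) =ᶠ[nhds p] (fun q => fderiv ℝ f q v) := by
      filter_upwards [hev] with q hq; rw [hq]
    have h1 : HasFDerivAt (fun q => fderiv ℝ f q v)
        ((ContinuousLinearMap.apply ℝ ℝ v).comp (fderiv ℝ (fderiv ℝ f) p)) p :=
      (ContinuousLinearMap.apply ℝ ℝ v).hasFDerivAt.comp p hdf'
    have h2 : HasFDerivAt (fun q => fderivWithin ℝ f S q v)
        ((ContinuousLinearMap.apply ℝ ℝ v).comp (fderiv ℝ (fderiv ℝ f) p)) p :=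
      h1.congr_of_eventuallyEq hevv
    rw [fderivWithin_of_mem_nhds hnd, h2.fderiv]
    rfl
  have e1 : pt (px f) p = fderiv ℝ (fderiv ℝ f) p (1, 0) ((0:ℝ), (1:ℝ)) := key (0, 1) (1, 0)
  have e2 : px (pt f) p = fderiv ℝ (fderiv ℝ f) p (0, 1) ((1:ℝ), (0:ℝ)) := key (1, 0) (0, 1)
  rw [e1, e2, hsymm ((1:ℝ),(0:ℝ)) ((0:ℝ),(1:ℝ))]

end CBED

namespace CBED

section OneD

/-- interval-integrability of continuous-on-Icc functions on [0,1]. -/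
lemma interint {g : ℝ → ℝ} (hg : ContinuousOn g (Set.Icc 0 1)) :
    IntervalIntegrable g volume 0 1 := by
  apply ContinuousOn.intervalIntegrable
  rwa [Set.uIcc_of_le (by norm_num : (0:ℝ) ≤ 1)]

/-- FTC on [0,1] with interior derivative. -/
lemma ftc01 {g h : ℝ → ℝ} (hg : ContinuousOn g (Set.Icc 0 1))
    (hh : ContinuousOn h (Set.Icc 0 1))
    (hd : ∀ x ∈ Set.Ioo (0:ℝ) 1, HasDerivAt g (h x) x) :
    ∫ x in (0:ℝ)..1, h x = g 1 - g 0 :=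
  integral_eq_sub_of_hasDeriv_right_of_le (by norm_num) hg
    (fun x hx => (hd x hx).hasDerivWithinAt) (interint hh)

/-- (∫|g|)² ≤ ∫ g². -/
lemma sq_int_abs_le {g : ℝ → ℝ} (hg : ContinuousOn g (Set.Icc 0 1)) :
    (∫ x in (0:ℝ)..1, |g x|) ^ 2 ≤ ∫ x in (0:ℝ)..1, (g x) ^ 2 := by
  set m := ∫ x in (0:ℝ)..1, |g x| with hm
  have habs : ContinuousOn (fun x => |g x|) (Set.Icc 0 1) := hg.abs
  have hsq : ContinuousOn (fun x => (g x) ^ 2) (Set.Icc 0 1) := hg.pow 2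
  have h0 : (0:ℝ) ≤ ∫ x in (0:ℝ)..1, (|g x| - m) ^ 2 :=
    intervalIntegral.integral_nonneg (by norm_num) (fun x _ => sq_nonneg _)
  have hexp : ∫ x in (0:ℝ)..1, (|g x| - m) ^ 2
      = (∫ x in (0:ℝ)..1, (g x) ^ 2) - 2 * m * m + m ^ 2 := by
    have h1 : ∀ x, (|g x| - m) ^ 2 = (g x) ^ 2 - (2 * m) * |g x| + m ^ 2 := by
      intro x; rw [sub_sq]; rw [sq_abs]; ring
    simp_rw [h1]
    rw [intervalIntegral.integral_add (((interint hsq).sub ((interint habs).const_mul _)))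
        intervalIntegrable_const,
      intervalIntegral.integral_sub (interint hsq) ((interint habs).const_mul _),
      intervalIntegral.integral_const_mul]
    rw [intervalIntegral.integral_const]
    rw [← hm]
    simp
  nlinarith [h0, hexp]

/-- pointwise bound via the derivative: if w(0)=0 then w(x)² ≤ ∫ w'². -/
lemma pointwise_sq_le {w w1 : ℝ → ℝ} (hw : ContinuousOn w (Set.Icc 0 1))
    (hw1 : ContinuousOn w1 (Set.Icc 0 1))
    (hd : ∀ x ∈ Set.Ioo (0:ℝ) 1, HasDerivAt w (w1 x) x)
    (h0 : w 0 = 0) {x : ℝ} (hx : x ∈ Set.Icc (0:ℝ) 1) :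
    (w x) ^ 2 ≤ ∫ y in (0:ℝ)..1, (w1 y) ^ 2 := by
  have hwx : w x = ∫ y in (0:ℝ)..x, w1 y := by
    have : ∫ y in (0:ℝ)..x, w1 y = w x - w 0 := by
      apply integral_eq_sub_of_hasDeriv_right_of_le hx.1 (hw.mono (Set.Icc_subset_Icc_right hx.2))
      · intro y hy
        exact (hd y ⟨hy.1, lt_of_lt_of_le hy.2 hx.2⟩).hasDerivWithinAt
      · apply ContinuousOn.intervalIntegrable
        rw [Set.uIcc_of_le hx.1]
        exact hw1.mono (Set.Icc_subset_Icc_right hx.2)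
    rw [this, h0, sub_zero]
  have h1 : |w x| ≤ ∫ y in (0:ℝ)..1, |w1 y| := by
    rw [hwx]
    calc |∫ y in (0:ℝ)..x, w1 y| ≤ ∫ y in (0:ℝ)..x, |w1 y| :=
          intervalIntegral.abs_integral_le_integral_abs hx.1
      _ ≤ ∫ y in (0:ℝ)..1, |w1 y| := by
          apply intervalIntegral.integral_mono_interval le_rfl hx.1 hx.2
          · exact Filter.Eventually.of_forall (fun y => abs_nonneg _)
          · exact interint hw1.abs
  have h2 : (0:ℝ) ≤ ∫ y in (0:ℝ)..1, |w1 y| :=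
    intervalIntegral.integral_nonneg (by norm_num) (fun y _ => abs_nonneg _)
  calc (w x) ^ 2 = |w x| ^ 2 := (sq_abs _).symm
    _ ≤ (∫ y in (0:ℝ)..1, |w1 y|) ^ 2 := by
        have := abs_nonneg (w x); nlinarith
    _ ≤ ∫ y in (0:ℝ)..1, (w1 y) ^ 2 := sq_int_abs_le hw1

end OneD

end CBED

namespace CBED

/-- a.e.-congruence on (0,1]: if two functions agree on the open interval, their
interval integrals over [0,1] agree. -/
lemma integral_congr_Ioo {f g : ℝ → ℝ}
    (h : ∀ x ∈ Set.Ioo (0:ℝ) 1, f x = g x) :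
    ∫ x in (0:ℝ)..1, f x = ∫ x in (0:ℝ)..1, g x := by
  apply intervalIntegral.integral_congr_ae
  have h1 : ∀ᵐ (x : ℝ), x ≠ 1 := by
    refine ae_iff.2 ?_
    simp only [ne_eq, not_not]
    have : {x : ℝ | x = 1} = {1} := rfl
    rw [this]
    exact Real.volume_singleton
  filter_upwards [h1] with x hx hmem
  rw [Set.uIoc_of_le (by norm_num : (0:ℝ) ≤ 1)] at hmem
  exact h x ⟨hmem.1, lt_of_le_of_ne hmem.2 hx⟩

/-- integral over [0,1] of a function bounded by a constant. -/
lemma int_le_const {f : ℝ → ℝ} (hf : IntervalIntegrable f volume 0 1) {C : ℝ}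
    (h : ∀ x ∈ Set.Icc (0:ℝ) 1, f x ≤ C) : ∫ x in (0:ℝ)..1, f x ≤ C := by
  have := intervalIntegral.integral_mono_on (by norm_num : (0:ℝ) ≤ 1) hf
    (_root_.intervalIntegrable_const (c := C)) h
  simpa using this

/-- Key per-component estimate. -/
lemma component_estimate {w w1 w2 τ σ g : ℝ → ℝ}
    (hw : ContinuousOn w (Set.Icc 0 1)) (hw1 : ContinuousOn w1 (Set.Icc 0 1))
    (hw2 : ContinuousOn w2 (Set.Icc 0 1)) (hτ : ContinuousOn τ (Set.Icc 0 1))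
    (hσ : ContinuousOn σ (Set.Icc 0 1)) (hg : ContinuousOn g (Set.Icc 0 1))
    (hwd : ∀ x ∈ Set.Ioo (0:ℝ) 1, HasDerivAt w (w1 x) x)
    (hw1d : ∀ x ∈ Set.Ioo (0:ℝ) 1, HasDerivAt w1 (w2 x) x)
    (hτd : ∀ x ∈ Set.Ioo (0:ℝ) 1, HasDerivAt τ (σ x) x)
    (hw0 : w 0 = 0) (hw01 : w 1 = 0) (hτ0 : τ 0 = 0) (hτ1 : τ 1 = 0)
    (hpde : ∀ x ∈ Set.Ioo (0:ℝ) 1, τ x = w2 x - g x) :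
    ∫ x in (0:ℝ)..1, w1 x * σ x
      ≤ -(1/2) * (∫ x in (0:ℝ)..1, (w1 x)^2) + (1/2) * ∫ x in (0:ℝ)..1, (g x)^2 := by
  have int_w1σ := interint (hw1.mul hσ)
  have int_w2τ := interint (hw2.mul hτ)
  have int_w1sq := interint (hw1.pow 2)
  have int_w2sq := interint (hw2.pow 2)
  have int_gsq := interint (hg.pow 2)
  have int_wsq := interint (hw.pow 2)
  -- Step 1: ∫ w2 τ + ∫ w1 σ = 0
  have S1 : (∫ x in (0:ℝ)..1, w2 x * τ x) + ∫ x in (0:ℝ)..1, w1 x * σ x = 0 := by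
    have hftc : ∫ x in (0:ℝ)..1, (w2 x * τ x + w1 x * σ x)
        = (fun x => w1 x * τ x) 1 - (fun x => w1 x * τ x) 0 :=
      ftc01 (hw1.mul hτ) ((hw2.mul hτ).add (hw1.mul hσ))
        (fun x hx => (hw1d x hx).mul (hτd x hx))
    rw [intervalIntegral.integral_add (f := fun x => w2 x * τ x) (g := fun x => w1 x * σ x) int_w2τ int_w1σ] at hftc
    simp only [hτ0, hτ1, mul_zero] at hftc
    linarith [hftc]
  -- Step 2: ∫ w2 τ = ∫ w2² - ∫ w2 g
  have S2 : (∫ x in (0:ℝ)..1, w2 x * τ x)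
      = (∫ x in (0:ℝ)..1, (w2 x)^2) - ∫ x in (0:ℝ)..1, w2 x * g x := by
    have h1 : ∫ x in (0:ℝ)..1, w2 x * τ x
        = ∫ x in (0:ℝ)..1, ((w2 x)^2 - w2 x * g x) := by
      apply integral_congr_Ioo
      intro x hx
      rw [hpde x hx]; ring
    rw [h1, intervalIntegral.integral_sub (f := fun x => (w2 x)^2) (g := fun x => w2 x * g x) int_w2sq (interint (hw2.mul hg))]
  -- Step 3: ∫ w2 g ≤ ½∫w2² + ½∫g²
  have S3 : (∫ x in (0:ℝ)..1, w2 x * g x)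
      ≤ (1/2) * (∫ x in (0:ℝ)..1, (w2 x)^2) + (1/2) * ∫ x in (0:ℝ)..1, (g x)^2 := by
    have h1 : (∫ x in (0:ℝ)..1, w2 x * g x)
        ≤ ∫ x in (0:ℝ)..1, ((w2 x)^2/2 + (g x)^2/2) := by
      apply intervalIntegral.integral_mono_on (by norm_num) (interint (hw2.mul hg))
        (interint ((hw2.pow 2).div_const 2 |>.add ((hg.pow 2).div_const 2)))
      intro x _
      show w2 x * g x ≤ (w2 x)^2/2 + (g x)^2/2
      nlinarith [sq_nonneg (w2 x - g x)]
    calc (∫ x in (0:ℝ)..1, w2 x * g x) ≤ ∫ x in (0:ℝ)..1, ((w2 x)^2/2 + (g x)^2/2) := h1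
      _ = (1/2) * (∫ x in (0:ℝ)..1, (w2 x)^2) + (1/2) * ∫ x in (0:ℝ)..1, (g x)^2 := by
          rw [intervalIntegral.integral_add (f := fun x => (w2 x)^2/2) (g := fun x => (g x)^2/2) ((int_w2sq).div_const 2) ((int_gsq).div_const 2),
            intervalIntegral.integral_div, intervalIntegral.integral_div]
          ring
  -- Step 4: ∫ w1² ≤ ∫ w2²
  have S4 : (∫ x in (0:ℝ)..1, (w1 x)^2) ≤ ∫ x in (0:ℝ)..1, (w2 x)^2 := by
    -- ∫ w1² + ∫ w w2 = 0
    have hftc : ∫ x in (0:ℝ)..1, ((w1 x)^2 + w x * w2 x)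
        = (fun x => w x * w1 x) 1 - (fun x => w x * w1 x) 0 := by
      apply ftc01 (hw.mul hw1) (((hw1.pow 2)).add (hw.mul hw2))
      intro x hx
      have := (hwd x hx).mul (hw1d x hx)
      refine this.congr_deriv ?_
      simp only [Pi.add_apply, Pi.pow_apply, Pi.mul_apply]
      ring
    rw [intervalIntegral.integral_add (f := fun x => (w1 x)^2) (g := fun x => w x * w2 x) int_w1sq (interint (hw.mul hw2))] at hftc
    simp only [hw0, hw01, zero_mul] at hftc
    -- so ∫ w1² = -∫ w w2 ≤ ∫ (w²/2 + w2²/2)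
    have h2 : (∫ x in (0:ℝ)..1, (w1 x)^2) = - ∫ x in (0:ℝ)..1, w x * w2 x := by
      linarith [hftc]
    have h3 : - (∫ x in (0:ℝ)..1, w x * w2 x)
        ≤ ∫ x in (0:ℝ)..1, ((w x)^2/2 + (w2 x)^2/2) := by
      rw [← intervalIntegral.integral_neg]
      apply intervalIntegral.integral_mono_on (by norm_num) ((interint (hw.mul hw2)).neg)
        (interint (((hw.pow 2).div_const 2).add ((hw2.pow 2).div_const 2)))
      intro x _
      simp only [Pi.neg_apply]
      show -(w x * w2 x) ≤ (w x)^2/2 + (w2 x)^2/2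
      nlinarith [sq_nonneg (w x + w2 x)]
    have h4 : ∫ x in (0:ℝ)..1, ((w x)^2/2 + (w2 x)^2/2)
        = (1/2) * (∫ x in (0:ℝ)..1, (w x)^2) + (1/2) * ∫ x in (0:ℝ)..1, (w2 x)^2 := by
      rw [intervalIntegral.integral_add (f := fun x => (w x)^2/2) (g := fun x => (w2 x)^2/2) ((int_wsq).div_const 2) ((int_w2sq).div_const 2),
        intervalIntegral.integral_div, intervalIntegral.integral_div]
      ring
    -- and ∫ w² ≤ ∫ w1²
    have h5 : (∫ x in (0:ℝ)..1, (w x)^2) ≤ ∫ x in (0:ℝ)..1, (w1 x)^2 := by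
      exact int_le_const int_wsq (fun x hx => pointwise_sq_le hw hw1 hwd hw0 hx)
    linarith
  linarith [S1, S2, S3, S4]

end CBED

namespace CBED

/-- ODE comparison: if `f ≥ 0` is continuous on `[0,∞)`, differentiable on `(0,∞)` with
`f' ≤ -f + C f²` and `C f 0 < 1`, then `f → 0` at `∞`. -/
lemma ode_decay {f f' : ℝ → ℝ} {C : ℝ} (hC : 0 ≤ C)
    (hcont : ContinuousOn f (Set.Ici 0))
    (hder : ∀ t > (0:ℝ), HasDerivAt f (f' t) t)
    (hnn : ∀ t ≥ (0:ℝ), 0 ≤ f t)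
    (hineq : ∀ t > (0:ℝ), f' t ≤ -f t + C * (f t)^2)
    (hinit : C * f 0 < 1) :
    Tendsto f atTop (nhds 0) := by
  have hf0 : 0 ≤ f 0 := hnn 0 le_rfl
  set M : ℝ := if C = 0 then f 0 + 1 else 1/C with hM
  have hfM : f 0 < M := by
    rcases eq_or_lt_of_le hC with h | h
    · simp [hM, ← h]
    · rw [hM, if_neg (ne_of_gt h)]
      rw [lt_div_iff₀ h, mul_comm]
      exact hinit
  set r1 : ℝ := f 0 + (M - f 0)/3 with hr1
  set r2 : ℝ := f 0 + 2*(M - f 0)/3 with hr2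
  have hr10 : 0 < r1 := by rw [hr1]; nlinarith
  have h01 : f 0 < r1 := by rw [hr1]; nlinarith
  have h12 : r1 < r2 := by rw [hr1, hr2]; nlinarith
  have h2M : r2 < M := by rw [hr2]; nlinarith
  have hCr2 : C * r2 < 1 := by
    rcases eq_or_lt_of_le hC with h | h
    · rw [← h]; norm_num
    · have : r2 < 1/C := by rw [hM, if_neg (ne_of_gt h)] at h2M; exact h2M
      calc C * r2 < C * (1/C) := by exact (mul_lt_mul_iff_right₀ h).2 this
        _ = 1 := by field_simp
  -- Stage 1: f t < r2 for all t ≥ 0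
  have bdd : ∀ t ≥ (0:ℝ), f t < r2 := by
    by_contra hcon
    push_neg at hcon
    obtain ⟨t₁, ht₁0, ht₁⟩ := hcon
    set E : Set ℝ := Set.Ici 0 ∩ f ⁻¹' (Set.Ici r2) with hE
    have hEne : E.Nonempty := ⟨t₁, ht₁0, ht₁⟩
    have hEclosed : IsClosed E :=
      hcont.preimage_isClosed_of_isClosed isClosed_Ici isClosed_Ici
    have hEbdd : BddBelow E := ⟨0, fun x hx => hx.1⟩
    set t₀ : ℝ := sInf E with ht₀
    have ht₀E : t₀ ∈ E := hEclosed.csInf_mem hEne hEbdd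
    have ht₀0 : 0 ≤ t₀ := ht₀E.1
    have ht₀r2 : r2 ≤ f t₀ := ht₀E.2
    have ht₀pos : 0 < t₀ := by
      rcases eq_or_lt_of_le ht₀0 with h | h
      · exfalso; rw [← h] at ht₀r2; linarith [lt_trans h01 h12]
      · exact h
    have hlt : ∀ τ ∈ Set.Ico (0:ℝ) t₀, f τ < r2 := by
      intro τ hτ
      by_contra hge
      push_neg at hge
      have : τ ∈ E := ⟨hτ.1, hge⟩
      exact absurd (csInf_le hEbdd this) (not_le.2 hτ.2)
    set G : Set ℝ := Set.Icc 0 t₀ ∩ f ⁻¹' (Set.Iic r1) with hG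
    have hGne : G.Nonempty := ⟨0, ⟨le_rfl, ht₀0⟩, by simpa using h01.le⟩
    have hGclosed : IsClosed G :=
      (hcont.mono (Set.Icc_subset_Ici_self)).preimage_isClosed_of_isClosed
        isClosed_Icc isClosed_Iic
    have hGbdd : BddAbove G := ⟨t₀, fun x hx => hx.1.2⟩
    set s : ℝ := sSup G with hs
    have hsG : s ∈ G := hGclosed.csSup_mem hGne hGbdd
    have hs0 : 0 ≤ s := hsG.1.1
    have hst₀ : s ≤ t₀ := hsG.1.2
    have hfs : f s ≤ r1 := hsG.2
    have hslt : s < t₀ := by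
      rcases eq_or_lt_of_le hst₀ with h | h
      · exfalso; rw [h] at hfs; linarith
      · exact h
    have hgt : ∀ τ ∈ Set.Ioc s t₀, r1 < f τ := by
      intro τ hτ
      by_contra hle
      push_neg at hle
      have : τ ∈ G := ⟨⟨le_trans hs0 hτ.1.le, hτ.2⟩, hle⟩
      exact absurd (le_csSup hGbdd this) (not_le.2 hτ.1)
    -- f is antitone on [s, t₀]
    have hanti : AntitoneOn f (Set.Icc s t₀) := by
      apply antitoneOn_of_deriv_nonpos (convex_Icc s t₀)
      · exact hcont.mono (fun x hx => le_trans hs0 hx.1)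
      · rw [interior_Icc]
        intro τ hτ
        exact ((hder τ (lt_of_le_of_lt hs0 hτ.1)).differentiableAt).differentiableWithinAt
      · rw [interior_Icc]
        intro τ hτ
        have hτpos : 0 < τ := lt_of_le_of_lt hs0 hτ.1
        rw [(hder τ hτpos).deriv]
        have h1 : r1 < f τ := hgt τ ⟨hτ.1, hτ.2.le⟩
        have h2 : f τ < r2 := hlt τ ⟨hτpos.le, hτ.2⟩
        have := hineq τ hτpos
        have hCf : C * f τ < 1 := by
          rcases eq_or_lt_of_le hC with h | h
          · rw [← h]; norm_num
          · calc C * f τ < C * r2 := (mul_lt_mul_iff_right₀ h).2 h2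
              _ < 1 := hCr2
        nlinarith
    have := hanti ⟨le_rfl, hst₀⟩ ⟨hst₀, le_rfl⟩ hst₀
    linarith
  -- Stage 2: exponential decay
  set ε : ℝ := 1 - C * r2 with hε
  have hεpos : 0 < ε := by rw [hε]; linarith
  set g : ℝ → ℝ := fun t => f t * Real.exp (ε * t) with hg
  have hganti : AntitoneOn g (Set.Ici 0) := by
    apply antitoneOn_of_deriv_nonpos (convex_Ici 0)
    · exact hcont.mul (Real.continuous_exp.comp (continuous_const.mul continuous_id)).continuousOn
    · rw [interior_Ici]
      intro τ hτ
      have hlin : HasDerivAt (fun t : ℝ => ε * t) ε τ := by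
        simpa using (hasDerivAt_id τ).const_mul ε
      have h1 : HasDerivAt g (f' τ * Real.exp (ε * τ) + f τ * (Real.exp (ε * τ) * ε)) τ :=
        HasDerivAt.mul (hder τ hτ) hlin.exp
      exact h1.differentiableAt.differentiableWithinAt
    · rw [interior_Ici]
      intro τ hτ
      have hlin : HasDerivAt (fun t : ℝ => ε * t) ε τ := by
        simpa using (hasDerivAt_id τ).const_mul ε
      have h1 : HasDerivAt g (f' τ * Real.exp (ε * τ) + f τ * (Real.exp (ε * τ) * ε)) τ :=
        HasDerivAt.mul (hder τ hτ) hlin.exp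
      rw [h1.deriv]
      have hfτ : 0 ≤ f τ := hnn τ hτ.le
      have hfr2 : f τ < r2 := bdd τ hτ.le
      have hexp : 0 < Real.exp (ε * τ) := Real.exp_pos _
      have hkey : f' τ + ε * f τ ≤ 0 := by
        have := hineq τ hτ
        have h2 : C * (f τ)^2 ≤ C * r2 * f τ := by
          nlinarith [mul_nonneg (mul_nonneg hC hfτ) (sub_nonneg.2 hfr2.le)]
        rw [hε]; nlinarith
      calc f' τ * Real.exp (ε * τ) + f τ * (Real.exp (ε * τ) * ε)
          = (f' τ + ε * f τ) * Real.exp (ε * τ) := by ring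
        _ ≤ 0 := mul_nonpos_of_nonpos_of_nonneg hkey hexp.le
  have hbound : ∀ t ≥ (0:ℝ), f t ≤ f 0 * Real.exp (-(ε * t)) := by
    intro t ht
    have := hganti (Set.self_mem_Ici) ht ht
    rw [hg] at this
    simp only [mul_zero, Real.exp_zero, mul_one] at this
    have hexp : 0 < Real.exp (ε * t) := Real.exp_pos _
    rw [Real.exp_neg, ← div_eq_mul_inv, le_div_iff₀ hexp]
    exact this
  have htends : Tendsto (fun t => f 0 * Real.exp (-(ε * t))) atTop (nhds 0) := by
    have h1 : Tendsto (fun t : ℝ => ε * t) atTop atTop :=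
      Tendsto.const_mul_atTop hεpos tendsto_id
    have h2 : Tendsto (fun t : ℝ => Real.exp (-(ε * t))) atTop (nhds 0) :=
      Real.tendsto_exp_neg_atTop_nhds_zero.comp h1
    have := h2.const_mul (f 0)
    simpa using this
  apply tendsto_of_tendsto_of_tendsto_of_le_of_le' tendsto_const_nhds htends
  · filter_upwards [eventually_ge_atTop (0:ℝ)] with t ht
    exact hnn t ht
  · filter_upwards [eventually_ge_atTop (0:ℝ)] with t ht
    exact hbound t ht

end CBED

namespace CBED

lemma exists_bound {K : Set (ℝ × ℝ)} (hK : IsCompact K) {g : ℝ × ℝ → ℝ}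
    (hg : ContinuousOn g K) : ∃ C : ℝ, ∀ p ∈ K, |g p| ≤ C := by
  rcases K.eq_empty_or_nonempty with h | h
  · exact ⟨0, by simp [h]⟩
  · obtain ⟨p₀, hp₀, hmax⟩ := hK.exists_isMaxOn h hg.abs
    exact ⟨|g p₀|, fun p hp => hmax hp⟩

/-- spatial slice of a continuous function on the strip. -/
lemma contOn_slice {g : ℝ × ℝ → ℝ} (hg : ContinuousOn g S) {t : ℝ} (ht : 0 ≤ t) :
    ContinuousOn (fun x => g (t, x)) (Set.Icc 0 1) := by
  apply hg.comp (Continuous.continuousOn (by fun_prop))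
  intro x hx
  exact mem_S ht hx

/-- continuity in `t` of a slice at fixed `x`. -/
lemma contWithin_tslice {g : ℝ × ℝ → ℝ} (hg : ContinuousOn g S) {t : ℝ} (ht : 0 ≤ t)
    {x : ℝ} (hx : x ∈ Set.Icc (0:ℝ) 1) :
    ContinuousWithinAt (fun t => g (t, x)) (Set.Ici 0) t := by
  have h1 : ContinuousWithinAt g S (t, x) := hg (t, x) (mem_S ht hx)
  have hc : Continuous (fun s : ℝ => ((s, x) : ℝ × ℝ)) := by fun_prop
  exact ContinuousWithinAt.comp (t := S) (f := fun s : ℝ => ((s, x) : ℝ × ℝ)) (g := g)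
    (s := Set.Ici 0) (x := t) h1 hc.continuousWithinAt (fun s hs => mem_S hs hx)

variable {f : ℝ × ℝ → ℝ}

lemma uIoc01 : Set.uIoc (0:ℝ) 1 = Set.Ioc 0 1 := Set.uIoc_of_le (by norm_num)

lemma aesm_slice {g : ℝ × ℝ → ℝ} (hg : ContinuousOn g S) {t : ℝ} (ht : 0 ≤ t) :
    MeasureTheory.AEStronglyMeasurable (fun x => g (t, x))
      (MeasureTheory.volume.restrict (Set.uIoc (0:ℝ) 1)) := by
  rw [uIoc01]
  exact ContinuousOn.aestronglyMeasurable
    ((contOn_slice hg ht).mono Set.Ioc_subset_Icc_self) measurableSet_Ioc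

set_option maxHeartbeats 1000000 in
/-- Continuity on `[0,∞)` of `t ↦ ∫₀¹ (∂ₓf)²`. -/
lemma continuousOn_int_sq (hf : ContDiffOn ℝ (⊤ : ℕ∞) f S) :
    ContinuousOn (fun t => ∫ x in (0:ℝ)..1, (px f (t, x))^2) (Set.Ici 0) := by
  intro t₀ ht₀
  have hpx := continuousOn_px hf
  set K : Set (ℝ × ℝ) := Set.Icc 0 (t₀+1) ×ˢ Set.Icc 0 1 with hK
  have hKS : K ⊆ S := fun p hp => ⟨hp.1.1, hp.2⟩
  have hKc : IsCompact K := (isCompact_Icc).prod isCompact_Icc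
  obtain ⟨C, hC⟩ := exists_bound hKc ((hpx.mono hKS).pow 2)
  have hmemIcc : Set.Icc (0:ℝ) (t₀+1) ∈ nhdsWithin t₀ (Set.Ici 0) := by
    apply mem_nhdsWithin.2
    exact ⟨Set.Iio (t₀+1), isOpen_Iio, by simpa using lt_add_one t₀,
      fun s hs => ⟨hs.2, hs.1.le⟩⟩
  apply intervalIntegral.continuousWithinAt_of_dominated_interval
      (bound := fun _ => C)
  · filter_upwards [self_mem_nhdsWithin] with t ht
    exact aesm_slice (hpx.pow 2) ht
  · filter_upwards [hmemIcc] with t ht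
    apply Filter.Eventually.of_forall
    intro x hx
    rw [uIoc01] at hx
    have hmem : ((t, x) : ℝ × ℝ) ∈ K := ⟨ht, Set.Ioc_subset_Icc_self hx⟩
    have h2 := hC _ hmem
    rw [Real.norm_eq_abs, abs_of_nonneg (sq_nonneg _)]
    rw [abs_of_nonneg (sq_nonneg _)] at h2
    exact h2
  · exact _root_.intervalIntegrable_const
  · apply Filter.Eventually.of_forall
    intro x hx
    rw [uIoc01] at hx
    exact (contWithin_tslice hpx ht₀ (Set.Ioc_subset_Icc_self hx)).pow 2

set_option maxHeartbeats 1000000 in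
/-- Differentiation under the integral sign for `t ↦ ∫₀¹ (∂ₓf)²`, `t₀ > 0`. -/
lemma hasDerivAt_int_sq (hf : ContDiffOn ℝ (⊤ : ℕ∞) f S) {t₀ : ℝ} (ht₀ : 0 < t₀) :
    HasDerivAt (fun t => ∫ x in (0:ℝ)..1, (px f (t, x))^2)
      (∫ x in (0:ℝ)..1, 2 * px f (t₀, x) * pt (px f) (t₀, x)) t₀ := by
  have hpx := continuousOn_px hf
  have hptpx := continuousOn_pt (contDiffOn_px hf)
  have hprod : ContinuousOn (fun p => 2 * px f p * pt (px f) p) S :=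
    (continuous_const.continuousOn.mul hpx).mul hptpx
  set K : Set (ℝ × ℝ) := Set.Icc (t₀/2) (3*t₀/2) ×ˢ Set.Icc 0 1 with hK
  have hKS : K ⊆ S := fun p hp => ⟨le_trans (by positivity) hp.1.1, hp.2⟩
  have hKc : IsCompact K := (isCompact_Icc).prod isCompact_Icc
  obtain ⟨C, hC⟩ := exists_bound hKc (hprod.mono hKS)
  have hball : Metric.ball t₀ (t₀/2) ⊆ Set.Icc (t₀/2) (3*t₀/2) := by
    intro s hs
    rw [Metric.mem_ball, Real.dist_eq, abs_lt] at hs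
    constructor <;> linarith [hs.1, hs.2]
  refine (intervalIntegral.hasDerivAt_integral_of_dominated_loc_of_deriv_le
    (F := fun t x => (px f (t, x))^2)
    (F' := fun t x => 2 * px f (t, x) * pt (px f) (t, x))
    (bound := fun _ => |C|)
    (Metric.ball_mem_nhds t₀ (by positivity : (0:ℝ) < t₀/2)) ?_ ?_ ?_ ?_ ?_ ?_).2
  · filter_upwards [Ioi_mem_nhds ht₀] with t ht
    exact aesm_slice (hpx.pow 2) (le_of_lt ht)
  · exact interint ((contOn_slice hpx ht₀.le).pow 2)
  · exact aesm_slice hprod ht₀.le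
  · apply Filter.Eventually.of_forall
    intro x hx t ht
    rw [uIoc01] at hx
    have hmem : ((t, x) : ℝ × ℝ) ∈ K := ⟨hball ht, Set.Ioc_subset_Icc_self hx⟩
    have h2 : |2 * px f (t, x) * pt (px f) (t, x)| ≤ C := hC _ hmem
    rw [Real.norm_eq_abs]
    exact h2.trans (le_abs_self C)
  · exact _root_.intervalIntegrable_const
  · apply Filter.Eventually.of_forall
    intro x hx t ht
    rw [uIoc01] at hx
    have htpos : 0 < t := lt_of_lt_of_le (by positivity) (hball ht).1
    have h1 : HasDerivAt (fun t => px f (t, x)) (pt (px f) (t, x)) t :=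
      hasDerivAt_t (contDiffOn_px hf) htpos (Set.Ioc_subset_Icc_self hx)
    have := h1.pow 2
    refine this.congr_deriv ?_
    push_cast
    ring

end CBED

namespace CBED

lemma numeric {K : ℝ} (hK : 0 < K) :
    (6 + 3*K^2) * ((-20 + Real.sqrt (400 + 36000*K^4)) / (36000*K^4)) ≤ 1 := by
  set c : ℝ := 36000*K^4 with hc
  have hcpos : 0 < c := by positivity
  set D : ℝ := 6 + 3*K^2 with hD
  have hDpos : 0 < D := by positivity
  have hsq : 400 + c ≤ (20 + c/D)^2 := by
    have h1 : (20 + c/D)^2 = 400 + 40*(c/D) + (c/D)^2 := by ring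
    rw [h1]
    have h2 : c ≤ 40*(c/D) + (c/D)^2 := by
      rw [div_pow, ← sub_nonneg]
      have key : 0 ≤ (40*D + c - D^2) * c / D^2 := by
        apply div_nonneg _ (by positivity)
        apply mul_nonneg _ hcpos.le
        rw [hD, hc]
        nlinarith [sq_nonneg K, sq_nonneg (K^2)]
      calc (0:ℝ) ≤ (40*D + c - D^2) * c / D^2 := key
        _ = 40*(c/D) + c^2/D^2 - c := by
            field_simp
    linarith
  have hsqrt : Real.sqrt (400 + c) ≤ 20 + c/D := by
    have h0 : (0:ℝ) ≤ 20 + c/D := by positivity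
    calc Real.sqrt (400 + c) ≤ Real.sqrt ((20 + c/D)^2) := Real.sqrt_le_sqrt hsq
      _ = 20 + c/D := by rw [Real.sqrt_sq h0]
  have h3 : -20 + Real.sqrt (400 + c) ≤ c/D := by linarith
  rw [mul_div_assoc', div_le_one hcpos]
  calc D * (-20 + Real.sqrt (400 + c)) ≤ D * (c/D) := by
        apply mul_le_mul_of_nonneg_left h3 hDpos.le
    _ = c := by field_simp

end CBED

namespace CBED

lemma final_ineq (IU IV A B K a b : ℝ)
    (hDu : IU ≤ -A + 3*A^2 + 6*a^2*(A*B))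
    (hDv : IV ≤ -B + 3*B^2 + 6*b^2*(A*B))
    (hABnn : 0 ≤ A*B)
    (p1 : 6*(a^2+b^2)*(A*B) ≤ 6*K^2*(A*B))
    (p2 : K^2*(4*(A*B)) ≤ K^2*(A+B)^2) :
    1/2 * (IU + IV) ≤ -(1/2*(A+B)) + (6+3*K^2) * (1/2*(A+B))^2 := by
  linarith only [hDu, hDv, p1, p2, hABnn]

lemma tri_sq (x y z : ℝ) : (x+y+z)^2 ≤ 3*x^2+3*y^2+3*z^2 := by
  nlinarith [sq_nonneg (x-y), sq_nonneg (x-z), sq_nonneg (y-z)]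

/-- vanishing of the time derivative on the lateral boundary. -/
lemma pt_boundary_zero {f : ℝ × ℝ → ℝ} (hf : ContDiffOn ℝ (⊤ : ℕ∞) f S) {t x : ℝ}
    (ht : 0 < t) (hx : x ∈ Set.Icc (0:ℝ) 1) (hzero : ∀ s ≥ (0:ℝ), f (s, x) = 0) :
    pt f (t, x) = 0 := by
  have h1 := hasDerivAt_t hf ht hx
  have h2 : (fun _ : ℝ => (0:ℝ)) =ᶠ[nhds t] (fun s => f (s, x)) := by
    filter_upwards [Ioi_mem_nhds ht] with s hs
    exact (hzero s hs.le).symm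
  have h3 : HasDerivAt (fun _ : ℝ => (0:ℝ)) (pt f (t, x)) t :=
    h1.congr_of_eventuallyEq h2
  exact h3.unique (hasDerivAt_const t 0)

end CBED

open CBED in
set_option maxHeartbeats 3000000 in
/-- For smooth solutions `u, v` of the coupled Burgers' equations on `[0,∞) × [0,1]`
with zero Dirichlet boundary conditions and `|a| + |b| > 0`: if the `H¹₀`-energy
`J t = ½(‖∂ₓu(t)‖² + ‖∂ₓv(t)‖²)` satisfies `J 0 < J₊`, where
`J₊ = (-20 + √(400 + c))/c` with `c = 36000(|a|+|b|)⁴` is the unique positive zero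
of `f J = -J + 40J² + cJ³`, then `J t → 0` as `t → ∞`. -/
theorem coupled_burgers_energy_decay (a b : ℝ) (hab : 0 < |a| + |b|)
    (c : ℝ) (hc : c = 36000 * (|a| + |b|) ^ 4)
    (Jplus : ℝ) (hJplus : Jplus = (-20 + Real.sqrt (400 + c)) / c)
    (u v : ℝ × ℝ → ℝ)
    (hu : ContDiffOn ℝ (⊤ : ℕ∞) u (Set.Ici (0:ℝ) ×ˢ Set.Icc (0:ℝ) 1))
    (hv : ContDiffOn ℝ (⊤ : ℕ∞) v (Set.Ici (0:ℝ) ×ˢ Set.Icc (0:ℝ) 1))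
    (hequ : ∀ t ≥ (0:ℝ), ∀ x ∈ Set.Icc (0:ℝ) 1,
      deriv (fun s => u (s, x)) t =
        deriv (deriv (fun y => u (t, y))) x - u (t, x) * deriv (fun y => u (t, y)) x
          - a * deriv (fun y => u (t, y) * v (t, y)) x)
    (heqv : ∀ t ≥ (0:ℝ), ∀ x ∈ Set.Icc (0:ℝ) 1,
      deriv (fun s => v (s, x)) t =
        deriv (deriv (fun y => v (t, y))) x - v (t, x) * deriv (fun y => v (t, y)) x
          - b * deriv (fun y => u (t, y) * v (t, y)) x)
    (hbc : ∀ t ≥ (0:ℝ), u (t, 0) = 0 ∧ u (t, 1) = 0 ∧ v (t, 0) = 0 ∧ v (t, 1) = 0)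
    (J : ℝ → ℝ)
    (hJ : ∀ t, J t = (1/2) * ((∫ x in (0:ℝ)..1, (deriv (fun y => u (t, y)) x) ^ 2)
        + ∫ x in (0:ℝ)..1, (deriv (fun y => v (t, y)) x) ^ 2))
    (h0 : J 0 < Jplus) :
    Filter.Tendsto J Filter.atTop (nhds 0) := by
  have hu' : ContDiffOn ℝ (⊤ : ℕ∞) u S := hu
  have hv' : ContDiffOn ℝ (⊤ : ℕ∞) v S := hv
  set K : ℝ := |a| + |b| with hK
  set C : ℝ := 6 + 3*K^2 with hCdef
  have hCpos : 0 < C := by positivity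
  set A : ℝ → ℝ := fun t => ∫ x in (0:ℝ)..1, (px u (t, x))^2 with hA
  set B : ℝ → ℝ := fun t => ∫ x in (0:ℝ)..1, (px v (t, x))^2 with hB
  set Jt : ℝ → ℝ := fun t => (1/2) * (A t + B t) with hJt
  have hAnn : ∀ t, 0 ≤ A t := fun t =>
    intervalIntegral.integral_nonneg (by norm_num) (fun x _ => sq_nonneg _)
  have hBnn : ∀ t, 0 ≤ B t := fun t =>
    intervalIntegral.integral_nonneg (by norm_num) (fun x _ => sq_nonneg _)
  -- J = Jt on [0,∞)
  have hJeq : ∀ t ≥ (0:ℝ), J t = Jt t := by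
    intro t ht
    rw [hJ t]
    have e1 : ∫ x in (0:ℝ)..1, (deriv (fun y => u (t, y)) x) ^ 2 = A t :=
      integral_congr_Ioo (fun x hx => by rw [deriv_eq_px hu' ht hx])
    have e2 : ∫ x in (0:ℝ)..1, (deriv (fun y => v (t, y)) x) ^ 2 = B t :=
      integral_congr_Ioo (fun x hx => by rw [deriv_eq_px hv' ht hx])
    rw [e1, e2]
  -- continuity of Jt on [0,∞)
  have hcont : ContinuousOn Jt (Set.Ici 0) :=
    (continuousOn_const.mul ((continuousOn_int_sq hu').add (continuousOn_int_sq hv')))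
  -- the derivative function
  set D : ℝ → ℝ := fun t => (1/2) *
    ((∫ x in (0:ℝ)..1, 2 * px u (t, x) * pt (px u) (t, x))
      + ∫ x in (0:ℝ)..1, 2 * px v (t, x) * pt (px v) (t, x)) with hD
  have hder : ∀ t > (0:ℝ), HasDerivAt Jt (D t) t := by
    intro t ht
    exact ((hasDerivAt_int_sq hu' ht).add (hasDerivAt_int_sq hv' ht)).const_mul (1/2)
  have hnn : ∀ t ≥ (0:ℝ), 0 ≤ Jt t := by
    intro t _
    have := hAnn t; have := hBnn t
    rw [hJt]; dsimp only; linarith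
  -- the differential inequality
  have hbound : ∀ t > (0:ℝ), D t ≤ -Jt t + C * (Jt t)^2 := by
    intro t ht
    have htle := ht.le
    -- continuity of derivative fields on S
    have cpu : ContinuousOn (px u) S := continuousOn_px hu'
    have cpv : ContinuousOn (px v) S := continuousOn_px hv'
    have cppu : ContinuousOn (px (px u)) S := continuousOn_px (contDiffOn_px hu')
    have cppv : ContinuousOn (px (px v)) S := continuousOn_px (contDiffOn_px hv')
    have cptu : ContinuousOn (pt u) S := continuousOn_pt hu'
    have cptv : ContinuousOn (pt v) S := continuousOn_pt hv'
    have cxtu : ContinuousOn (px (pt u)) S := continuousOn_px (contDiffOn_pt hu')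
    have cxtv : ContinuousOn (px (pt v)) S := continuousOn_px (contDiffOn_pt hv')
    -- slice continuity
    have hcu : ContinuousOn (fun x => u (t, x)) (Set.Icc 0 1) :=
      contOn_slice hu'.continuousOn htle
    have hcv : ContinuousOn (fun x => v (t, x)) (Set.Icc 0 1) :=
      contOn_slice hv'.continuousOn htle
    have hcpu : ContinuousOn (fun x => px u (t, x)) (Set.Icc 0 1) := contOn_slice cpu htle
    have hcpv : ContinuousOn (fun x => px v (t, x)) (Set.Icc 0 1) := contOn_slice cpv htle
    have hcppu : ContinuousOn (fun x => px (px u) (t, x)) (Set.Icc 0 1) := contOn_slice cppu htle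
    have hcppv : ContinuousOn (fun x => px (px v) (t, x)) (Set.Icc 0 1) := contOn_slice cppv htle
    have hcptu : ContinuousOn (fun x => pt u (t, x)) (Set.Icc 0 1) := contOn_slice cptu htle
    have hcptv : ContinuousOn (fun x => pt v (t, x)) (Set.Icc 0 1) := contOn_slice cptv htle
    have hcxtu : ContinuousOn (fun x => px (pt u) (t, x)) (Set.Icc 0 1) := contOn_slice cxtu htle
    have hcxtv : ContinuousOn (fun x => px (pt v) (t, x)) (Set.Icc 0 1) := contOn_slice cxtv htle
    -- boundary conditions
    obtain ⟨hu0, hu1, hv0, hv1⟩ := hbc t htle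
    have h01 : (0:ℝ) ∈ Set.Icc (0:ℝ) 1 := by norm_num
    have h11 : (1:ℝ) ∈ Set.Icc (0:ℝ) 1 := by norm_num
    have hτu0 : pt u (t, 0) = 0 := pt_boundary_zero hu' ht h01 (fun s hs => (hbc s hs).1)
    have hτu1 : pt u (t, 1) = 0 := pt_boundary_zero hu' ht h11 (fun s hs => (hbc s hs).2.1)
    have hτv0 : pt v (t, 0) = 0 := pt_boundary_zero hv' ht h01 (fun s hs => (hbc s hs).2.2.1)
    have hτv1 : pt v (t, 1) = 0 := pt_boundary_zero hv' ht h11 (fun s hs => (hbc s hs).2.2.2)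
    -- nonlinear terms
    set gu : ℝ → ℝ := fun x =>
      u (t, x) * px u (t, x) + a * (px u (t, x) * v (t, x) + u (t, x) * px v (t, x)) with hgu
    set gv : ℝ → ℝ := fun x =>
      v (t, x) * px v (t, x) + b * (px u (t, x) * v (t, x) + u (t, x) * px v (t, x)) with hgv
    have hguc : ContinuousOn gu (Set.Icc 0 1) :=
      (hcu.mul hcpu).add (continuousOn_const.mul ((hcpu.mul hcv).add (hcu.mul hcpv)))
    have hgvc : ContinuousOn gv (Set.Icc 0 1) :=
      (hcv.mul hcpv).add (continuousOn_const.mul ((hcpu.mul hcv).add (hcu.mul hcpv)))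
    -- derivative facts
    have hwd_u : ∀ x ∈ Set.Ioo (0:ℝ) 1, HasDerivAt (fun x => u (t, x)) (px u (t, x)) x :=
      fun x hx => hasDerivAt_x hu' htle hx
    have hwd_v : ∀ x ∈ Set.Ioo (0:ℝ) 1, HasDerivAt (fun x => v (t, x)) (px v (t, x)) x :=
      fun x hx => hasDerivAt_x hv' htle hx
    have hw1d_u : ∀ x ∈ Set.Ioo (0:ℝ) 1,
        HasDerivAt (fun x => px u (t, x)) (px (px u) (t, x)) x :=
      fun x hx => hasDerivAt_x (contDiffOn_px hu') htle hx
    have hw1d_v : ∀ x ∈ Set.Ioo (0:ℝ) 1,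
        HasDerivAt (fun x => px v (t, x)) (px (px v) (t, x)) x :=
      fun x hx => hasDerivAt_x (contDiffOn_px hv') htle hx
    have hτd_u : ∀ x ∈ Set.Ioo (0:ℝ) 1,
        HasDerivAt (fun x => pt u (t, x)) (px (pt u) (t, x)) x :=
      fun x hx => hasDerivAt_x (contDiffOn_pt hu') htle hx
    have hτd_v : ∀ x ∈ Set.Ioo (0:ℝ) 1,
        HasDerivAt (fun x => pt v (t, x)) (px (pt v) (t, x)) x :=
      fun x hx => hasDerivAt_x (contDiffOn_pt hv') htle hx
    -- the PDE in terms of the canonical partial derivatives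
    have hprod : ∀ x ∈ Set.Ioo (0:ℝ) 1, deriv (fun y => u (t, y) * v (t, y)) x
        = px u (t, x) * v (t, x) + u (t, x) * px v (t, x) := by
      intro x hx
      exact ((hasDerivAt_x hu' htle hx).mul (hasDerivAt_x hv' htle hx)).deriv
    have hpdeu : ∀ x ∈ Set.Ioo (0:ℝ) 1, pt u (t, x) = px (px u) (t, x) - gu x := by
      intro x hx
      have hxIcc := Set.mem_Icc_of_Ioo hx
      have h1 := hequ t htle x hxIcc
      rw [(hasDerivAt_t hu' ht hxIcc).deriv, deriv2_eq_pxpx hu' htle hx,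
        deriv_eq_px hu' htle hx, hprod x hx] at h1
      rw [h1, hgu]; ring
    have hpdev : ∀ x ∈ Set.Ioo (0:ℝ) 1, pt v (t, x) = px (px v) (t, x) - gv x := by
      intro x hx
      have hxIcc := Set.mem_Icc_of_Ioo hx
      have h1 := heqv t htle x hxIcc
      rw [(hasDerivAt_t hv' ht hxIcc).deriv, deriv2_eq_pxpx hv' htle hx,
        deriv_eq_px hv' htle hx, hprod x hx] at h1
      rw [h1, hgv]; ring
    -- component estimates
    have hcomp_u : (∫ x in (0:ℝ)..1, px u (t, x) * px (pt u) (t, x))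
        ≤ -(1/2) * (∫ x in (0:ℝ)..1, (px u (t, x))^2)
          + (1/2) * ∫ x in (0:ℝ)..1, (gu x)^2 :=
      component_estimate hcu hcpu hcppu hcptu hcxtu hguc hwd_u hw1d_u hτd_u
        hu0 hu1 hτu0 hτu1 hpdeu
    have hcomp_v : (∫ x in (0:ℝ)..1, px v (t, x) * px (pt v) (t, x))
        ≤ -(1/2) * (∫ x in (0:ℝ)..1, (px v (t, x))^2)
          + (1/2) * ∫ x in (0:ℝ)..1, (gv x)^2 :=
      component_estimate hcv hcpv hcppv hcptv hcxtv hgvc hwd_v hw1d_v hτd_v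
        hv0 hv1 hτv0 hτv1 hpdev
    -- mixed partials symmetry inside the integrals
    have hmix_u : (∫ x in (0:ℝ)..1, 2 * px u (t, x) * pt (px u) (t, x))
        = 2 * ∫ x in (0:ℝ)..1, px u (t, x) * px (pt u) (t, x) := by
      rw [integral_congr_Ioo (f := fun x => 2 * px u (t, x) * pt (px u) (t, x))
        (g := fun x => 2 * (px u (t, x) * px (pt u) (t, x)))
        (fun x hx => by rw [mixed_symm hu' ht hx]; ring)]
      exact intervalIntegral.integral_const_mul 2 _
    have hmix_v : (∫ x in (0:ℝ)..1, 2 * px v (t, x) * pt (px v) (t, x))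
        = 2 * ∫ x in (0:ℝ)..1, px v (t, x) * px (pt v) (t, x) := by
      rw [integral_congr_Ioo (f := fun x => 2 * px v (t, x) * pt (px v) (t, x))
        (g := fun x => 2 * (px v (t, x) * px (pt v) (t, x)))
        (fun x hx => by rw [mixed_symm hv' ht hx]; ring)]
      exact intervalIntegral.integral_const_mul 2 _
    -- pointwise sup bounds
    have hptw_u : ∀ x ∈ Set.Icc (0:ℝ) 1, (u (t, x))^2 ≤ A t :=
      fun x hx => pointwise_sq_le hcu hcpu hwd_u hu0 hx
    have hptw_v : ∀ x ∈ Set.Icc (0:ℝ) 1, (v (t, x))^2 ≤ B t :=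
      fun x hx => pointwise_sq_le hcv hcpv hwd_v hv0 hx
    -- bounds on the nonlinear terms
    have hgub : (∫ x in (0:ℝ)..1, (gu x)^2)
        ≤ 3*(A t)^2 + 6*a^2*(A t * B t) := by
      set c1 : ℝ := 3*(A t) + 3*a^2*(B t) with hc1
      set c2 : ℝ := 3*a^2*(A t) with hc2
      have hpt : ∀ x ∈ Set.Icc (0:ℝ) 1,
          (gu x)^2 ≤ c1 * (px u (t, x))^2 + c2 * (px v (t, x))^2 := by
        intro x hx
        have h1 := hptw_u x hx
        have h2 := hptw_v x hx
        have h3 := sq_nonneg (px u (t, x))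
        have h4 := sq_nonneg (px v (t, x))
        have hP : (u (t, x) * px u (t, x))^2 ≤ A t * (px u (t, x))^2 := by
          linarith only [mul_nonneg (sub_nonneg.2 h1) h3]
        have hQ : (px u (t, x) * v (t, x))^2 ≤ B t * (px u (t, x))^2 := by
          linarith only [mul_nonneg (sub_nonneg.2 h2) h3]
        have hR : (u (t, x) * px v (t, x))^2 ≤ A t * (px v (t, x))^2 := by
          linarith only [mul_nonneg (sub_nonneg.2 h1) h4]
        have htri := tri_sq (u (t, x) * px u (t, x)) (a * (px u (t, x) * v (t, x)))
          (a * (u (t, x) * px v (t, x)))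
        have hgueq : gu x = u (t, x) * px u (t, x) + a * (px u (t, x) * v (t, x))
            + a * (u (t, x) * px v (t, x)) := by rw [hgu]; ring
        have hQ' : 3*(a * (px u (t, x) * v (t, x)))^2
            ≤ 3*a^2*(B t * (px u (t, x))^2) := by
          have := mul_le_mul_of_nonneg_left hQ (mul_nonneg (by norm_num : (0:ℝ) ≤ 3)
            (sq_nonneg a))
          calc 3*(a * (px u (t, x) * v (t, x)))^2
              = 3*a^2*(px u (t, x) * v (t, x))^2 := by ring
            _ ≤ 3*a^2*(B t * (px u (t, x))^2) := by
                apply mul_le_mul_of_nonneg_left hQ (by positivity)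
        have hR' : 3*(a * (u (t, x) * px v (t, x)))^2
            ≤ 3*a^2*(A t * (px v (t, x))^2) := by
          calc 3*(a * (u (t, x) * px v (t, x)))^2
              = 3*a^2*(u (t, x) * px v (t, x))^2 := by ring
            _ ≤ 3*a^2*(A t * (px v (t, x))^2) := by
                apply mul_le_mul_of_nonneg_left hR (by positivity)
        rw [hgueq, hc1, hc2]
        linarith only [htri, hP, hQ', hR']
      have hmono : (∫ x in (0:ℝ)..1, (gu x)^2)
          ≤ ∫ x in (0:ℝ)..1, (c1 * (px u (t, x))^2 + c2 * (px v (t, x))^2) :=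
        intervalIntegral.integral_mono_on (by norm_num) (interint (hguc.pow 2))
          (interint ((continuousOn_const.mul (hcpu.pow 2)).add
            (continuousOn_const.mul (hcpv.pow 2)))) hpt
      have heval : (∫ x in (0:ℝ)..1, (c1 * (px u (t, x))^2 + c2 * (px v (t, x))^2))
          = c1 * A t + c2 * B t := by
        rw [intervalIntegral.integral_add (f := fun x => c1 * (px u (t, x))^2) (g := fun x => c2 * (px v (t, x))^2) ((interint (hcpu.pow 2)).const_mul c1)
          ((interint (hcpv.pow 2)).const_mul c2),
          intervalIntegral.integral_const_mul, intervalIntegral.integral_const_mul]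
      rw [heval] at hmono
      calc (∫ x in (0:ℝ)..1, (gu x)^2) ≤ c1 * A t + c2 * B t := hmono
        _ = 3*(A t)^2 + 6*a^2*(A t * B t) := by rw [hc1, hc2]; ring
    have hgvb : (∫ x in (0:ℝ)..1, (gv x)^2)
        ≤ 3*(B t)^2 + 6*b^2*(A t * B t) := by
      set c1 : ℝ := 3*b^2*(B t) with hc1
      set c2 : ℝ := 3*(B t) + 3*b^2*(A t) with hc2
      have hpt : ∀ x ∈ Set.Icc (0:ℝ) 1,
          (gv x)^2 ≤ c1 * (px u (t, x))^2 + c2 * (px v (t, x))^2 := by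
        intro x hx
        have h1 := hptw_u x hx
        have h2 := hptw_v x hx
        have h3 := sq_nonneg (px u (t, x))
        have h4 := sq_nonneg (px v (t, x))
        have hP : (v (t, x) * px v (t, x))^2 ≤ B t * (px v (t, x))^2 := by
          linarith only [mul_nonneg (sub_nonneg.2 h2) h4]
        have hQ : (px u (t, x) * v (t, x))^2 ≤ B t * (px u (t, x))^2 := by
          linarith only [mul_nonneg (sub_nonneg.2 h2) h3]
        have hR : (u (t, x) * px v (t, x))^2 ≤ A t * (px v (t, x))^2 := by
          linarith only [mul_nonneg (sub_nonneg.2 h1) h4]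
        have htri := tri_sq (v (t, x) * px v (t, x)) (b * (px u (t, x) * v (t, x)))
          (b * (u (t, x) * px v (t, x)))
        have hgveq : gv x = v (t, x) * px v (t, x) + b * (px u (t, x) * v (t, x))
            + b * (u (t, x) * px v (t, x)) := by rw [hgv]; ring
        have hQ' : 3*(b * (px u (t, x) * v (t, x)))^2
            ≤ 3*b^2*(B t * (px u (t, x))^2) := by
          calc 3*(b * (px u (t, x) * v (t, x)))^2
              = 3*b^2*(px u (t, x) * v (t, x))^2 := by ring
            _ ≤ 3*b^2*(B t * (px u (t, x))^2) := by
                apply mul_le_mul_of_nonneg_left hQ (by positivity)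
        have hR' : 3*(b * (u (t, x) * px v (t, x)))^2
            ≤ 3*b^2*(A t * (px v (t, x))^2) := by
          calc 3*(b * (u (t, x) * px v (t, x)))^2
              = 3*b^2*(u (t, x) * px v (t, x))^2 := by ring
            _ ≤ 3*b^2*(A t * (px v (t, x))^2) := by
                apply mul_le_mul_of_nonneg_left hR (by positivity)
        rw [hgveq, hc1, hc2]
        linarith only [htri, hP, hQ', hR']
      have hmono : (∫ x in (0:ℝ)..1, (gv x)^2)
          ≤ ∫ x in (0:ℝ)..1, (c1 * (px u (t, x))^2 + c2 * (px v (t, x))^2) :=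
        intervalIntegral.integral_mono_on (by norm_num) (interint (hgvc.pow 2))
          (interint ((continuousOn_const.mul (hcpu.pow 2)).add
            (continuousOn_const.mul (hcpv.pow 2)))) hpt
      have heval : (∫ x in (0:ℝ)..1, (c1 * (px u (t, x))^2 + c2 * (px v (t, x))^2))
          = c1 * A t + c2 * B t := by
        rw [intervalIntegral.integral_add (f := fun x => c1 * (px u (t, x))^2) (g := fun x => c2 * (px v (t, x))^2) ((interint (hcpu.pow 2)).const_mul c1)
          ((interint (hcpv.pow 2)).const_mul c2),
          intervalIntegral.integral_const_mul, intervalIntegral.integral_const_mul]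
      rw [heval] at hmono
      calc (∫ x in (0:ℝ)..1, (gv x)^2) ≤ c1 * A t + c2 * B t := hmono
        _ = 3*(B t)^2 + 6*b^2*(A t * B t) := by rw [hc1, hc2]; ring
    -- assemble
    have hAt : A t = ∫ x in (0:ℝ)..1, (px u (t, x))^2 := rfl
    have hBt : B t = ∫ x in (0:ℝ)..1, (px v (t, x))^2 := rfl
    have hDu : (∫ x in (0:ℝ)..1, 2 * px u (t, x) * pt (px u) (t, x))
        ≤ -(A t) + 3*(A t)^2 + 6*a^2*(A t * B t) := by
      rw [hmix_u]
      rw [hAt]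
      linarith [hcomp_u, hgub]
    have hDv : (∫ x in (0:ℝ)..1, 2 * px v (t, x) * pt (px v) (t, x))
        ≤ -(B t) + 3*(B t)^2 + 6*b^2*(A t * B t) := by
      rw [hmix_v]
      rw [hBt]
      linarith [hcomp_v, hgvb]
    have hK2 : a^2 + b^2 ≤ K^2 := by
      rw [hK]
      linarith only [mul_nonneg (abs_nonneg a) (abs_nonneg b), sq_abs a, sq_abs b,
        sq_nonneg (|a| + |b|)]
    have hAnn' := hAnn t
    have hBnn' := hBnn t
    have hABnn : 0 ≤ A t * B t := mul_nonneg hAnn' hBnn'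
    have p1 : 6*(a^2+b^2)*(A t * B t) ≤ 6*K^2*(A t * B t) := by
      have h6 : 0 ≤ (K^2 - (a^2+b^2)) * (A t * B t) :=
        mul_nonneg (sub_nonneg.2 hK2) hABnn
      linarith only [h6]
    have p2 : K^2*(4*(A t * B t)) ≤ K^2*(A t + B t)^2 := by
      linarith only [mul_nonneg (sq_nonneg K) (sq_nonneg (A t - B t))]
    rw [hD, hJt, hCdef]
    dsimp only
    exact final_ineq _ _ _ _ _ _ _ hDu hDv hABnn p1 p2
  -- initial condition
  have hinit : C * Jt 0 < 1 := by
    have h1 : Jt 0 = J 0 := (hJeq 0 le_rfl).symm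
    have h2 : C * Jplus ≤ 1 := by
      have := numeric (K := K) hab
      rw [hJplus, hc]
      calc C * ((-20 + Real.sqrt (400 + 36000 * K ^ 4)) / (36000 * K ^ 4)) ≤ 1 := by
            rw [hCdef]; exact this
        _ ≤ 1 := le_rfl
    calc C * Jt 0 = C * J 0 := by rw [h1]
      _ < C * Jplus := by exact (mul_lt_mul_iff_right₀ hCpos).2 h0
      _ ≤ 1 := h2
  have hJtends : Filter.Tendsto Jt Filter.atTop (nhds 0) :=
    ode_decay hCpos.le hcont hder hnn hbound hinit
  apply Filter.Tendsto.congr' _ hJtends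
  filter_upwards [Filter.eventually_ge_atTop (0:ℝ)] with t ht
  exact (hJeq t ht).symm
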